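/- Fix integers n ≥ 2 and N with 1 ≤ N ≤ n², a real c ≥ 1, an injective map v : Fin N → ℝ, and ε ∈ ℝ. Draw a sample s = (s₁, …, s_{4n}) of 4n indices independently and uniformly at random from Fin N, and define β(s) ∈ ℝ ∪ {+∞} as the minimum of { v(s_t) : 1 ≤ t ≤ 4n, v(s_t) ≥ ε } (equal to +∞ if this set is empty). Then the probability that the number of indices t ∈ Fin N with ε < v(t) ≤ β(s) exceeds (c/2)·n·ln n + 1 is at most n^{−2c}. -/

import Mathlib

open MeasureTheory

theorem stmt_17 (n N : ℕ) (hn : 2 ≤ n) (hN1 : 1 ≤ N) (hN2 : N ≤ n ^ 2)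
    (c : ℝ) (hc : 1 ≤ c) (v : Fin N → ℝ) (hv : Function.Injective v) (ε : ℝ) :
    (MeasureTheory.Measure.pi fun _ : Fin (4 * n) =>
        (@PMF.uniformOfFintype (Fin N) _ ⟨⟨0, by omega⟩⟩).toMeasure)
      {s : Fin (4 * n) → Fin N |
        (c / 2) * n * Real.log n + 1 <
          (Nat.card {t : Fin N // ε < v t ∧
            ∀ u : Fin (4 * n), ε ≤ v (s u) → v t ≤ v (s u)} : ℝ)} ≤
      ENNReal.ofReal ((n : ℝ) ^ (-(2 * c))) := by
  classical
  have hn0 : (0 : ℝ) < n := by positivity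
  have hN0 : (0 : ℝ) < N := by exact_mod_cast hN1
  have hlog : (0 : ℝ) < Real.log n := Real.log_pos (by exact_mod_cast hn)
  have hc0 : (0 : ℝ) < c := lt_of_lt_of_le one_pos hc
  set x : ℝ := (c / 2) * n * Real.log n with hxdef
  have hx0 : 0 ≤ x := by positivity
  set f : ℕ := ⌊x⌋₊ + 1 with hfdef
  have hxf : x < (f : ℝ) := by
    have := Nat.lt_floor_add_one x
    rw [hfdef]; push_cast; linarith
  have hfL : (f : ℝ) ≤ x + 1 := by
    have := Nat.floor_le hx0
    rw [hfdef]; push_cast; linarith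
  -- counting helper
  have hcount : ∀ (s : Fin (4 * n) → Fin N) (G : Finset (Fin N)),
      (∀ t : Fin N, (ε < v t ∧ ∀ u : Fin (4 * n), ε ≤ v (s u) → v t ≤ v (s u)) → t ∈ G) →
      Nat.card {t : Fin N // ε < v t ∧
          ∀ u : Fin (4 * n), ε ≤ v (s u) → v t ≤ v (s u)} ≤ G.card := by
    intro s G hG
    have h1 : Nat.card {t : Fin N // ε < v t ∧
        ∀ u : Fin (4 * n), ε ≤ v (s u) → v t ≤ v (s u)} ≤ Nat.card G := by
      apply Nat.card_le_card_of_injective (fun t => ⟨t.1, hG t.1 t.2⟩)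
      intro a b hab
      simp only [Subtype.mk.injEq] at hab
      exact Subtype.ext hab
    simpa [Nat.card_eq_finsetCard] using h1
  set K : Finset (Fin N) := Finset.univ.filter (fun t => ε < v t) with hKdef
  by_cases hk : K.card ≤ f
  · -- event is empty
    have hempty : {s : Fin (4 * n) → Fin N |
        (c / 2) * n * Real.log n + 1 <
          (Nat.card {t : Fin N // ε < v t ∧
            ∀ u : Fin (4 * n), ε ≤ v (s u) → v t ≤ v (s u)} : ℝ)} = ∅ := by
      ext s
      simp only [Set.mem_setOf_eq, Set.mem_empty_iff_false, iff_false, not_lt]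
      have h1 := hcount s K (fun t ht => by simp [hKdef, ht.1])
      have h2 : (Nat.card {t : Fin N // ε < v t ∧
          ∀ u : Fin (4 * n), ε ≤ v (s u) → v t ≤ v (s u)} : ℝ) ≤ (f : ℝ) := by
        exact_mod_cast le_trans h1 hk
      linarith
    rw [hempty]
    simp
  · push_neg at hk
    -- build the forbidden set F of the f smallest critical values above ε
    set W : Finset ℝ := K.image v with hWdef
    have hWcard : W.card = K.card := Finset.card_image_of_injective K hv
    have hfW : f < W.card := by omega
    set e := W.orderIsoOfFin rfl with hedef
    set w : ℝ := (e ⟨f, hfW⟩ : ℝ) with hwdef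
    set F : Finset (Fin N) := K.filter (fun t => v t < w) with hFdef
    have hFK : F ⊆ K := Finset.filter_subset _ _
    -- card of F equals f
    have hWf : (W.filter (fun y => y < w)).card = f := by
      rw [← Finset.card_range f]
      apply (Finset.card_bij (fun j hj => (e ⟨j, lt_trans (Finset.mem_range.mp hj) hfW⟩ : ℝ)) ?_ ?_ ?_).symm
      · intro a ha
        refine Finset.mem_filter.mpr ⟨(e _).2, ?_⟩
        have : (⟨a, lt_trans (Finset.mem_range.mp ha) hfW⟩ : Fin W.card) < ⟨f, hfW⟩ := by
          simp [Fin.lt_def, Finset.mem_range.mp ha]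
        exact Subtype.coe_lt_coe.mpr (e.strictMono this)
      · intro a₁ ha₁ a₂ ha₂ hEq
        have := e.injective (Subtype.coe_injective hEq)
        simpa using congrArg Fin.val this
      · intro b hb
        obtain ⟨hbW, hbw⟩ := Finset.mem_filter.mp hb
        obtain ⟨j, hj⟩ := e.surjective ⟨b, hbW⟩
        have hjf : (j : ℕ) < f := by
          have : j < (⟨f, hfW⟩ : Fin W.card) := by
            rw [← e.lt_iff_lt, hj]
            exact Subtype.coe_lt_coe.mp (by simpa [hwdef] using hbw)
          simpa [Fin.lt_def] using this
        refine ⟨j, Finset.mem_range.mpr hjf, ?_⟩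
        simp only [Fin.eta, hj]
    have hFcard : F.card = f := by
      rw [← hWf, hFdef]
      apply Finset.card_bij (fun t _ => v t)
      · intro a ha
        obtain ⟨haK, haw⟩ := Finset.mem_filter.mp ha
        exact Finset.mem_filter.mpr ⟨Finset.mem_image_of_mem v haK, haw⟩
      · intro a₁ _ a₂ _ hEq; exact hv hEq
      · intro b hb
        obtain ⟨hbW, hbw⟩ := Finset.mem_filter.mp hb
        obtain ⟨t, htK, htv⟩ := Finset.mem_image.mp hbW
        exact ⟨t, Finset.mem_filter.mpr ⟨htK, htv ▸ hbw⟩, htv⟩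
    have hKN : K.card ≤ N := by simpa using Finset.card_le_univ K
    have hfN : f ≤ N := hFcard ▸ le_trans (Finset.card_le_card hFK) hKN
    -- event inclusion
    have hsub : {s : Fin (4 * n) → Fin N |
        (c / 2) * n * Real.log n + 1 <
          (Nat.card {t : Fin N // ε < v t ∧
            ∀ u : Fin (4 * n), ε ≤ v (s u) → v t ≤ v (s u)} : ℝ)} ⊆
        Set.univ.pi (fun _ : Fin (4 * n) => ((Fᶜ : Finset (Fin N)) : Set (Fin N))) := by
      intro s hs
      intro u _
      simp only [Finset.coe_compl, Set.mem_compl_iff, Finset.mem_coe]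
      intro huF
      have hsuε : ε < v (s u) := (Finset.mem_filter.mp (hFK huF)).2
      have hle : Nat.card {t : Fin N // ε < v t ∧
          ∀ u : Fin (4 * n), ε ≤ v (s u) → v t ≤ v (s u)} ≤ F.card := by
        apply hcount
        intro t ⟨ht1, ht2⟩
        refine Finset.mem_filter.mpr ⟨Finset.mem_filter.mpr ⟨Finset.mem_univ _, ht1⟩, ?_⟩
        exact lt_of_le_of_lt (ht2 u hsuε.le) ((Finset.mem_filter.mp huF).2)
      have hs' : (c / 2) * n * Real.log n + 1 < (f : ℝ) := by
        have := hs
        simp only [Set.mem_setOf_eq] at this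
        calc (c / 2) * n * Real.log n + 1 < _ := this
          _ ≤ (f : ℝ) := by exact_mod_cast hFcard ▸ hle
      linarith [hfL]
    refine le_trans (measure_mono hsub) ?_
    rw [MeasureTheory.Measure.pi_pi]
    have hfactor : ∀ u : Fin (4 * n),
        (@PMF.uniformOfFintype (Fin N) _ ⟨⟨0, by omega⟩⟩).toMeasure
          ((Fᶜ : Finset (Fin N)) : Set (Fin N)) =
        ENNReal.ofReal (((N : ℝ) - f) / N) := by
      intro u
      rw [PMF.toMeasure_apply_finset]
      simp only [PMF.uniformOfFintype_apply, Fintype.card_fin]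
      rw [Finset.sum_const, Finset.card_compl, Fintype.card_fin, hFcard, nsmul_eq_mul]
      rw [ENNReal.ofReal_div_of_pos hN0, div_eq_mul_inv]
      congr 1
      · rw [← Nat.cast_sub hfN, ENNReal.ofReal_natCast]
      · rw [ENNReal.ofReal_natCast]
    rw [Finset.prod_congr rfl (fun u _ => hfactor u), Finset.prod_const, Finset.card_univ,
      Fintype.card_fin]
    have hq0 : (0 : ℝ) ≤ ((N : ℝ) - f) / N := by
      apply div_nonneg _ hN0.le
      have : (f : ℝ) ≤ (N : ℝ) := by exact_mod_cast hfN
      linarith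
    rw [← ENNReal.ofReal_pow hq0]
    apply ENNReal.ofReal_le_ofReal
    -- real inequality
    have hstep1 : ((N : ℝ) - f) / N ≤ Real.exp (-(f / N)) := by
      have h1 : -(f / N) + 1 ≤ Real.exp (-(f / N)) := Real.add_one_le_exp _
      have h2 : ((N : ℝ) - f) / N = -(f / N) + 1 := by field_simp; ring
      linarith
    calc (((N : ℝ) - f) / N) ^ (4 * n) ≤ Real.exp (-(f / N)) ^ (4 * n) :=
          pow_le_pow_left₀ hq0 hstep1 _
      _ = Real.exp ((4 * n : ℕ) * (-(f / N))) := by rw [← Real.exp_nat_mul]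
      _ ≤ Real.exp (Real.log n * (-(2 * c))) := by
          apply Real.exp_le_exp.mpr
          have hN2' : (N : ℝ) ≤ (n : ℝ) ^ 2 := by exact_mod_cast hN2
          have key : Real.log n * (2 * c) * N ≤ 4 * n * (f : ℝ) := by
            calc Real.log n * (2 * c) * N ≤ Real.log n * (2 * c) * ((n : ℝ) ^ 2) := by
                  apply mul_le_mul_of_nonneg_left hN2' (by positivity)
              _ = 4 * n * x := by rw [hxdef]; ring
              _ ≤ 4 * n * (f : ℝ) := by nlinarith
          rw [show ((4 * n : ℕ) : ℝ) = 4 * (n : ℝ) from by push_cast; ring,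
            show 4 * (n : ℝ) * -((f : ℝ) / N) = -((4 * n * f) / N) from by ring,
            show Real.log n * -(2 * c) = -(Real.log n * (2 * c)) from by ring,
            neg_le_neg_iff, le_div_iff₀ hN0]
          exact key
      _ = (n : ℝ) ^ (-(2 * c)) := (Real.rpow_def_of_pos hn0 _).symm
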